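/- Let G be a locally compact group, X and Ξ G-spaces with G-invariant measures, Y a separable Hilbert space with a unitary representation μ : G → U(Y), and ψ : X × Ξ → Y a joint-G-equivariant feature map. Define the ridgelet transform R_ψ[f](ξ) := ∫_X ⟨f(x), ψ(x,ξ)⟩_Y dx for f : X → Y, the representation π_g[f](x) := μ_g(f(g⁻¹·x)) on L²(X;Y), and the representation π̂_g[γ](ξ) := γ(g⁻¹·ξ) on L²(Ξ). Then R_ψ intertwines π and π̂: for every g ∈ G and f for which the integrals are defined, R_ψ[π_g[f]] = π̂_g[R_ψ[f]]. -/

import Mathlib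

open MeasureTheory

/-- Let `G` be a locally compact group, `X` and `Ξ` `G`-spaces with
`G`-invariant measures, `Y` a separable Hilbert space with a unitary representation
`ρ : G → U(Y)`, and `ψ : X × Ξ → Y` a joint-`G`-equivariant feature map.  The ridgelet
transform `R_ψ[f](ξ) := ∫_X ⟨f(x), ψ(x,ξ)⟩_Y dx` intertwines
`π_g[f](x) = ρ_g (f (g⁻¹ • x))` and `π̂_g[γ](ξ) = γ(g⁻¹ • ξ)`:
`R_ψ[π_g f] = π̂_g[R_ψ f]`. -/
theorem statement5
    {G X Ξ Y : Type*} [Group G] [TopologicalSpace G] [IsTopologicalGroup G]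
    [LocallyCompactSpace G]
    [MeasurableSpace X] [MulAction G X]
    [MeasurableSpace Ξ] [MulAction G Ξ]
    (μX : Measure X) (μΞ : Measure Ξ)
    (hμX : ∀ g : G, MeasurePreserving (fun x : X => g • x) μX μX)
    (hμΞ : ∀ g : G, MeasurePreserving (fun ξ : Ξ => g • ξ) μΞ μΞ)
    [NormedAddCommGroup Y] [InnerProductSpace ℂ Y] [CompleteSpace Y]
    [TopologicalSpace.SeparableSpace Y]
    (ρ : G →* (Y ≃ₗᵢ[ℂ] Y))
    (ψ : X → Ξ → Y)
    (hψ : ∀ (g : G) (x : X) (ξ : Ξ), ψ (g • x) (g • ξ) = ρ g (ψ x ξ))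
    (R : (X → Y) → Ξ → ℂ)
    (hR : ∀ (f : X → Y) (ξ : Ξ), R f ξ = ∫ x, (inner ℂ (f x) (ψ x ξ) : ℂ) ∂μX)
    (g : G) (f : X → Y)
    (hint : ∀ ξ : Ξ, Integrable (fun x => (inner ℂ (f x) (ψ x ξ) : ℂ)) μX) :
    ∀ ξ : Ξ, R (fun x => ρ g (f (g⁻¹ • x))) ξ = R f (g⁻¹ • ξ) := by
  intro ξ
  rw [hR, hR]
  let e : X ≃ᵐ X :=
    { toFun := fun x => g • x
      invFun := fun x => g⁻¹ • x
      left_inv := fun x => by simp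
      right_inv := fun x => by simp
      measurable_toFun := (hμX g).measurable
      measurable_invFun := (hμX g⁻¹).measurable }
  have emb : MeasurableEmbedding (fun x : X => g • x) := e.measurableEmbedding
  have key := (hμX g).integral_comp emb
    (fun x => (inner ℂ ((fun x => ρ g (f (g⁻¹ • x))) x) (ψ x ξ) : ℂ))
  simp only at key
  rw [← key]
  congr 1
  funext x
  have hψ' : ψ (g • x) ξ = ρ g (ψ x (g⁻¹ • ξ)) := by
    have := hψ g x (g⁻¹ • ξ)
    simpa using this
  simp [hψ', LinearIsometryEquiv.inner_map_map]
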